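/- Suppose M = 2, K_absorb is nonempty and equals a contiguous interval {k1,…,k2} with 1 ≤ k1 ≤ k2 ≤ K−2, and E_absorb ≤ (e_{1,max} + e_{2,max})/Δ. Then there exists a constant c_min > 0 such that, whenever c_1 = c_2 ≥ c_min, the optimal value of the operator's quadratic program does not depend on how the excess energy is allocated between the two firms: for any nonnegative reals s_1, s_2 with s_1 + s_2 = E_absorb and s_m ≤ e_{m,max}/Δ for m = 1,2, there exists an optimal solution with ∑_{k=0}^{K−1} p*_chg,m,k = s_m for m = 1,2; in particular an optimal solution exists with the fair split s_m = E_{m,split} := min(max(E_absorb/2, E_absorb − e_{3−m,max}/Δ), e_{m,max}/Δ). -/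

import Mathlib

set_option maxHeartbeats 1000000


/-- Feasibility of a pair `(p, pchg)` for the operator's quadratic program. -/
def Feasible (K M : ℕ) (Δ pgmin : ℝ) (pL emax : ℕ → ℝ)
    (p pchg : ℕ → ℕ → ℝ) : Prop :=
  (∀ k < K, pgmin - pL k ≤ ∑ m ∈ Finset.range M, p m k) ∧
  (∀ m < M, ∀ k < K, 0 ≤ pchg m k ∧ p m k ≤ pchg m k) ∧
  (∀ m < M, ∀ k, 1 ≤ k → k ≤ K - 1 →
    0 ≤ ∑ j ∈ Finset.range k, p m j ∧ ∑ j ∈ Finset.range k, p m j ≤ emax m / Δ) ∧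
  (∀ m < M, ∑ j ∈ Finset.range K, p m j = 0)

/-- The operator's objective. -/
noncomputable def Objective (K M : ℕ) (a : ℝ) (pL c : ℕ → ℝ)
    (p pchg : ℕ → ℕ → ℝ) : ℝ :=
  (1/2) * ∑ k ∈ Finset.range K, (∑ m ∈ Finset.range M, p m k)^2
    + ∑ k ∈ Finset.range K, ∑ m ∈ Finset.range M, pL k * p m k
    + ∑ k ∈ Finset.range K, ∑ m ∈ Finset.range M, (c m / a) * pchg m k

/-- A feasible pair is optimal if it minimizes the objective over the feasible set. -/
noncomputable def Optimal (K M : ℕ) (Δ a pgmin : ℝ) (pL emax c : ℕ → ℝ)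
    (p pchg : ℕ → ℕ → ℝ) : Prop :=
  Feasible K M Δ pgmin pL emax p pchg ∧
  ∀ q qchg : ℕ → ℕ → ℝ, Feasible K M Δ pgmin pL emax q qchg →
    Objective K M a pL c p pchg ≤ Objective K M a pL c q qchg


noncomputable def PhiQ (K : ℕ) (pL : ℕ → ℝ) (Q : ℕ → ℝ) : ℝ :=
  ∑ k ∈ Finset.range K, ((Q k)^2/2 + pL k * Q k)

def F0set (K k1 k2 : ℕ) (pgmin : ℝ) (pL : ℕ → ℝ) : Set (ℕ → ℝ) :=
  {Q | (∀ k, k ∉ Finset.Ico (k2+1) K →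
          Q k = if k ∈ Finset.Icc k1 k2 then pgmin - pL k else 0) ∧
       (∀ k ∈ Finset.Ico (k2+1) K, pgmin - pL k ≤ Q k ∧ Q k ≤ 0) ∧
       ∑ k ∈ Finset.Ico (k2+1) K, Q k = -∑ k ∈ Finset.Icc k1 k2, (pgmin - pL k)}

lemma quad_bound (x y v B M : ℝ) (hx : |x| ≤ B) (hy : |y| ≤ B) (hv : |v| ≤ M) :
    y^2/2 + v*y ≤ x^2/2 + v*x + (B + M) * |x - y| := by
  have h2 : (y-x) * ((x+y)/2 + v) ≤ |y-x| * |(x+y)/2+v| := by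
    calc (y-x) * ((x+y)/2 + v) ≤ |(y-x) * ((x+y)/2 + v)| := le_abs_self _
    _ = |y-x| * |(x+y)/2+v| := abs_mul _ _
  have h3 : |(x+y)/2 + v| ≤ B + M := by
    calc |(x+y)/2 + v| ≤ |(x+y)/2| + |v| := abs_add_le _ _
    _ = |x+y|/2 + |v| := by rw [abs_div]; norm_num
    _ ≤ (|x| + |y|)/2 + |v| := by gcongr; exact abs_add_le _ _
    _ ≤ B + M := by have := abs_nonneg (x+y); linarith
  have h4 : |y - x| = |x - y| := abs_sub_comm _ _
  have h5 : |y-x| * |(x+y)/2+v| ≤ |x - y| * (B + M) := by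
    rw [h4]; exact mul_le_mul_of_nonneg_left h3 (abs_nonneg _)
  nlinarith [h2, h5]

lemma range_split (K k1 k2 : ℕ) (h1 : k1 ≤ k2+1) (h2 : k2+1 ≤ K) (f : ℕ → ℝ) :
    ∑ k ∈ Finset.range K, f k
      = ∑ k ∈ Finset.range k1, f k + ∑ k ∈ Finset.Icc k1 k2, f k
        + ∑ k ∈ Finset.Ico (k2+1) K, f k := by
  rw [Finset.range_eq_Ico, ← Finset.sum_Ico_consecutive f (Nat.zero_le k1) (le_trans h1 h2),
    ← Finset.sum_Ico_consecutive f h1 h2, ← Finset.Ico_add_one_right_eq_Icc k1 k2,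
    ← Finset.range_eq_Ico, add_assoc]

lemma penalty (K k1 k2 : ℕ) (a pgmin Eb c : ℝ) (pL : ℕ → ℝ) (ha : 0 < a)
    (hk1 : 1 ≤ k1) (hk12 : k1 ≤ k2) (hk2 : k2 + 2 ≤ K)
    (hEkpos : ∀ k ∈ Finset.Icc k1 k2, 0 ≤ pgmin - pL k)
    (hEkneg : ∀ k < K, k ∉ Finset.Icc k1 k2 → pgmin - pL k ≤ 0)
    (hEb : 0 ≤ Eb)
    (hEcap : (∑ k ∈ Finset.Icc k1 k2, (pgmin - pL k)) ≤ Eb)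
    (Qh : ℕ → ℝ)
    (hmin : ∀ Q' ∈ F0set K k1 k2 pgmin pL, PhiQ K pL Qh ≤ PhiQ K pL Q')
    (hc : a * (3 * (Eb + ∑ k ∈ Finset.range K, |pL k|) + 1) ≤ c)
    (Q : ℕ → ℝ)
    (hQ1 : ∀ k < K, pgmin - pL k ≤ Q k)
    (hQ2 : ∀ j ≤ K, 0 ≤ ∑ i ∈ Finset.range j, Q i ∧ ∑ i ∈ Finset.range j, Q i ≤ Eb)
    (hQ3 : ∑ i ∈ Finset.range K, Q i = 0) :
    PhiQ K pL Qh + (c/a) * (∑ k ∈ Finset.Icc k1 k2, (pgmin - pL k))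
      ≤ PhiQ K pL Q + (c/a) * ∑ k ∈ Finset.range K, max (Q k) 0 := by
  classical
  set A := Finset.Icc k1 k2 with hAdef
  set Af := Finset.Ico (k2+1) K with hAfdef
  set Etot := ∑ k ∈ A, (pgmin - pL k) with hEtot
  set Mx := ∑ k ∈ Finset.range K, |pL k| with hMx
  set R := Eb + Mx with hRdef
  have hMx0 : 0 ≤ Mx := Finset.sum_nonneg fun i _ => abs_nonneg _
  have hR0 : 0 ≤ R := by rw [hRdef]; linarith
  have hE0 : 0 ≤ Etot := Finset.sum_nonneg hEkpos
  have hAK : ∀ k ∈ A, k < K := by intro k hk; simp [hAdef, Finset.mem_Icc] at hk; omega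
  have hAfK : ∀ k ∈ Af, k < K := by intro k hk; simp [hAfdef, Finset.mem_Ico] at hk; omega
  have hbox : ∀ k < K, |Q k| ≤ Eb := by
    intro k hk
    have h1 := hQ2 k (by omega)
    have h2 := hQ2 (k+1) (by omega)
    rw [Finset.sum_range_succ] at h2
    exact abs_le.mpr ⟨by linarith [h1.2, h2.1], by linarith [h1.1, h2.2]⟩
  set N := ∑ k ∈ Af, max (-Q k) 0 with hN
  set Pb := ∑ k ∈ Finset.range k1, max (Q k) 0 with hPb
  set Nb := ∑ k ∈ Finset.range k1, max (-Q k) 0 with hNb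
  set Pa := ∑ k ∈ Af, max (Q k) 0 with hPa
  set G := ∑ k ∈ A, (Q k - (pgmin - pL k)) with hG
  have hN0 : 0 ≤ N := Finset.sum_nonneg fun i _ => le_max_right _ _
  have hPb0 : 0 ≤ Pb := Finset.sum_nonneg fun i _ => le_max_right _ _
  have hNb0 : 0 ≤ Nb := Finset.sum_nonneg fun i _ => le_max_right _ _
  have hPa0 : 0 ≤ Pa := Finset.sum_nonneg fun i _ => le_max_right _ _
  have hG0 : 0 ≤ G := Finset.sum_nonneg fun i hi => by
    have := hQ1 i (hAK i hi); have := hEkpos i hi; simp; linarith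
  have hSb : ∑ k ∈ Finset.range k1, Q k = Pb - Nb := by
    rw [hPb, hNb, ← Finset.sum_sub_distrib]
    exact Finset.sum_congr rfl fun i _ => (max_zero_sub_max_neg_zero_eq_self (Q i)).symm
  have hSb0 : 0 ≤ ∑ k ∈ Finset.range k1, Q k := (hQ2 k1 (by omega)).1
  have hAfQ : ∑ k ∈ Af, Q k = Pa - N := by
    rw [hPa, hN, ← Finset.sum_sub_distrib]
    exact Finset.sum_congr rfl fun i _ => (max_zero_sub_max_neg_zero_eq_self (Q i)).symm
  have hAQ : ∑ k ∈ A, Q k = G + Etot := by rw [hG, hEtot, ← Finset.sum_add_distrib]; ring_nf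
  have hNid : N = (Pb - Nb) + G + Etot + Pa := by
    have := hQ3
    rw [range_split K k1 k2 (by omega) (by omega) Q, hSb, hAQ, hAfQ] at this
    linarith
  have hNE : Etot ≤ N := by linarith
  have hT : ∑ k ∈ Finset.range K, max (Q k) 0 = Etot + (Pb + G + Pa) := by
    rw [range_split K k1 k2 (by omega) (by omega) (fun k => max (Q k) 0)]
    have e2 : ∑ k ∈ A, max (Q k) 0 = G + Etot := by
      rw [← hAQ]
      exact Finset.sum_congr rfl fun i hi =>
        max_eq_left (le_trans (hEkpos i hi) (hQ1 i (hAK i hi)))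
    rw [e2]; ring
  set eps := Pb + G + Pa with heps
  have heps0 : 0 ≤ eps := by rw [heps]; linarith
  set rho := if N = 0 then (0:ℝ) else Etot / N with hrho
  have hNz : N = 0 → Etot = 0 := fun h => le_antisymm (h ▸ hNE) hE0
  have hrho0 : 0 ≤ rho := by
    rw [hrho]; split
    · exact le_rfl
    · exact div_nonneg hE0 hN0
  have hrho1 : rho ≤ 1 := by
    rw [hrho]; split
    · norm_num
    · rename_i h
      rw [div_le_one (lt_of_le_of_ne hN0 (Ne.symm h))]; exact hNE
  have hrhoN : rho * N = Etot := by
    rw [hrho]; split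
    · rename_i h; rw [h, hNz h]; ring
    · rename_i h; field_simp
  obtain ⟨Q', hQ'A, hQ'Af, hQ'O⟩ :
      ∃ Q' : ℕ → ℝ, (∀ k ∈ A, Q' k = pgmin - pL k) ∧
        (∀ k ∈ Af, Q' k = -(rho * max (-Q k) 0)) ∧
        (∀ k, k ∉ A → k ∉ Af → Q' k = 0) := by
    refine ⟨fun k => if k ∈ A then pgmin - pL k else if k ∈ Af then -(rho * max (-Q k) 0) else 0,
      ?_, ?_, ?_⟩
    · intro k hk; simp [hk]
    · intro k hk
      have : k ∉ A := by simp [hAfdef, Finset.mem_Ico] at hk; simp [hAdef, Finset.mem_Icc]; omega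
      simp [hk, this]
    · intro k h1 h2; simp [h1, h2]
  have hdisj : ∀ k, k ∈ Af → k ∉ A := by
    intro k hk; simp [hAfdef, Finset.mem_Ico] at hk; simp [hAdef, Finset.mem_Icc]; omega
  have hQ'F0 : Q' ∈ F0set K k1 k2 pgmin pL := by
    refine ⟨?_, ?_, ?_⟩
    · intro k hk
      by_cases h : k ∈ A
      · rw [hQ'A k h, if_pos h]
      · rw [hQ'O k h hk, if_neg h]
    · intro k hk
      rw [hQ'Af k hk]
      have hm0 : 0 ≤ max (-Q k) 0 := le_max_right _ _
      have hub : max (-Q k) 0 ≤ -(pgmin - pL k) :=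
        max_le (by linarith [hQ1 k (hAfK k hk)])
          (by linarith [hEkneg k (hAfK k hk) (hdisj k hk)])
      constructor
      · nlinarith
      · nlinarith
    · rw [Finset.sum_congr rfl hQ'Af, ← hEtot, ← hrhoN, hN, Finset.mul_sum]
      rw [← Finset.sum_neg_distrib]
  have hdist : ∑ k ∈ Finset.range K, |Q k - Q' k| ≤ 2 * eps := by
    rw [range_split K k1 k2 (by omega) (by omega)]
    have d1 : ∑ k ∈ Finset.range k1, |Q k - Q' k| = Pb + Nb := by
      rw [hPb, hNb, ← Finset.sum_add_distrib]
      apply Finset.sum_congr rfl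
      intro i hi
      have hiA : i ∉ A := by simp at hi; simp [hAdef, Finset.mem_Icc]; omega
      have hiAf : i ∉ Af := by simp at hi; simp [hAfdef, Finset.mem_Ico]; omega
      rw [hQ'O i hiA hiAf, sub_zero, max_zero_add_max_neg_zero_eq_abs_self]
    have d2 : ∑ k ∈ A, |Q k - Q' k| = G := by
      rw [hG]
      apply Finset.sum_congr rfl
      intro i hi
      rw [hQ'A i hi]
      exact abs_of_nonneg (by linarith [hQ1 i (hAK i hi), hEkpos i hi])
    have d3 : ∑ k ∈ Af, |Q k - Q' k| ≤ Pa + (1 - rho) * N := by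
      have : Pa + (1-rho) * N = ∑ k ∈ Af, (max (Q k) 0 + (1-rho) * max (-Q k) 0) := by
        rw [Finset.sum_add_distrib, ← Finset.mul_sum, hPa, hN]
      rw [this]
      apply Finset.sum_le_sum
      intro i hi
      rw [hQ'Af i hi]
      have h1 : max (Q i) 0 - max (-Q i) 0 = Q i := max_zero_sub_max_neg_zero_eq_self _
      have h2 : 0 ≤ max (Q i) 0 := le_max_right _ _
      have h3 : 0 ≤ max (-Q i) 0 := le_max_right _ _
      rw [abs_le]
      constructor <;> nlinarith
    have : (1 - rho) * N = Pb - Nb + G + Pa := by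
      rw [sub_mul, hrhoN, one_mul]; linarith
    linarith
  have hbox' : ∀ k < K, |Q' k| ≤ Eb := by
    intro k hk
    by_cases h : k ∈ A
    · rw [hQ'A k h, abs_of_nonneg (hEkpos k h)]
      calc pgmin - pL k ≤ Etot := Finset.single_le_sum (fun i hi => hEkpos i hi) h
        _ ≤ Eb := hEcap
    · by_cases h' : k ∈ Af
      · rw [hQ'Af k h']
        have h3 : 0 ≤ max (-Q k) 0 := le_max_right _ _
        have : max (-Q k) 0 ≤ |Q k| := max_le (neg_le_abs _) (abs_nonneg _)
        rw [abs_neg, abs_of_nonneg (by positivity)]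
        calc rho * max (-Q k) 0 ≤ 1 * max (-Q k) 0 := by nlinarith
          _ ≤ |Q k| := by linarith
          _ ≤ Eb := hbox k hk
      · rw [hQ'O k h h']; simp [hEb]
  have hPhi : PhiQ K pL Q' ≤ PhiQ K pL Q + R * ∑ k ∈ Finset.range K, |Q k - Q' k| := by
    rw [PhiQ, PhiQ, Finset.mul_sum, ← Finset.sum_add_distrib]
    apply Finset.sum_le_sum
    intro i hi
    have hiK : i < K := Finset.mem_range.mp hi
    have hpl : |pL i| ≤ Mx := Finset.single_le_sum (fun j _ => abs_nonneg (pL j)) hi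
    have := quad_bound (Q i) (Q' i) (pL i) Eb Mx (hbox i hiK) (hbox' i hiK) hpl
    rw [hRdef]; linarith
  have hca : 3 * R + 1 ≤ c / a := by
    rw [le_div_iff₀ ha]; linarith [hc]
  have hD0 : 0 ≤ ∑ k ∈ Finset.range K, |Q k - Q' k| :=
    Finset.sum_nonneg fun i _ => abs_nonneg _
  have hchain : PhiQ K pL Qh ≤ PhiQ K pL Q + 2 * R * eps := by
    have := hmin Q' hQ'F0
    have h2 : R * ∑ k ∈ Finset.range K, |Q k - Q' k| ≤ R * (2 * eps) :=
      mul_le_mul_of_nonneg_left hdist hR0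
    linarith
  clear_value A Af Etot Mx R N Pb Nb Pa G eps rho
  rw [hT]
  have hce : 2 * R * eps ≤ (c/a) * eps := by nlinarith
  have hdistr : (c/a) * (Etot + eps) = (c/a) * Etot + (c/a) * eps := by ring
  linarith

lemma F0_facts (K k1 k2 : ℕ) (pgmin : ℝ) (pL : ℕ → ℝ)
    (hk1 : 1 ≤ k1) (hk12 : k1 ≤ k2) (hk2 : k2 + 2 ≤ K)
    (hEkpos : ∀ k ∈ Finset.Icc k1 k2, 0 ≤ pgmin - pL k)
    (hEkneg : ∀ k < K, k ∉ Finset.Icc k1 k2 → pgmin - pL k ≤ 0)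
    (Q : ℕ → ℝ) (hQ : Q ∈ F0set K k1 k2 pgmin pL) :
    (∀ k < K, pgmin - pL k ≤ Q k) ∧
    (∀ j ≤ K, 0 ≤ ∑ i ∈ Finset.range j, Q i ∧
        ∑ i ∈ Finset.range j, Q i ≤ ∑ k ∈ Finset.Icc k1 k2, (pgmin - pL k)) ∧
    (∑ i ∈ Finset.range K, Q i = 0) ∧
    (∑ k ∈ Finset.range K, max (Q k) 0 = ∑ k ∈ Finset.Icc k1 k2, (pgmin - pL k)) := by
  obtain ⟨h1, h2, h3⟩ := hQ
  set Etot := ∑ k ∈ Finset.Icc k1 k2, (pgmin - pL k) with hEtot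
  have hE0 : 0 ≤ Etot := Finset.sum_nonneg hEkpos
  have hB : ∀ k < k1, Q k = 0 := by
    intro k hk
    rw [h1 k (by simp [Finset.mem_Ico]; omega), if_neg (by simp [Finset.mem_Icc]; omega)]
  have hA : ∀ k ∈ Finset.Icc k1 k2, Q k = pgmin - pL k := by
    intro k hk
    simp only [Finset.mem_Icc] at hk
    rw [h1 k (by simp [Finset.mem_Ico]; omega), if_pos (by simp [Finset.mem_Icc]; omega)]
  -- partial sums over initial segments
  have hcum1 : ∀ j ≤ k1, ∑ i ∈ Finset.range j, Q i = 0 := by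
    intro j hj
    exact Finset.sum_eq_zero fun i hi => hB i (by simp at hi; omega)
  have hcum2 : ∀ j, k1 ≤ j → j ≤ k2 + 1 →
      ∑ i ∈ Finset.range j, Q i = ∑ i ∈ Finset.Ico k1 j, (pgmin - pL i) := by
    intro j hj1 hj2
    rw [Finset.range_eq_Ico, ← Finset.sum_Ico_consecutive Q (Nat.zero_le k1) hj1,
      ← Finset.range_eq_Ico, hcum1 k1 le_rfl, zero_add]
    exact Finset.sum_congr rfl fun i hi => hA i (by simp [Finset.mem_Icc]; simp [Finset.mem_Ico] at hi; omega)
  have hcumE : ∑ i ∈ Finset.range (k2+1), Q i = Etot := by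
    rw [hcum2 (k2+1) (by omega) le_rfl, hEtot, ← Finset.Ico_add_one_right_eq_Icc k1 k2]
  have htot : ∑ i ∈ Finset.range K, Q i = 0 := by
    rw [Finset.range_eq_Ico, ← Finset.sum_Ico_consecutive Q (Nat.zero_le (k2+1)) (by omega),
      ← Finset.range_eq_Ico, hcumE, h3]
    ring
  refine ⟨?_, ?_, htot, ?_⟩
  · intro k hk
    rcases lt_or_ge k k1 with h | h
    · rw [hB k h]; exact hEkneg k hk (by simp [Finset.mem_Icc]; omega)
    rcases le_or_gt k k2 with h' | h'
    · rw [hA k (by simp [Finset.mem_Icc]; omega)]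
    · exact (h2 k (by simp [Finset.mem_Ico]; omega)).1
  · intro j hj
    rcases le_or_gt j k1 with h | h
    · rw [hcum1 j h]; exact ⟨le_rfl, hE0⟩
    rcases le_or_gt j (k2+1) with h' | h'
    · rw [hcum2 j (by omega) h']
      constructor
      · exact Finset.sum_nonneg fun i hi => hEkpos i (by simp [Finset.mem_Icc]; simp [Finset.mem_Ico] at hi; omega)
      · rw [hEtot, ← Finset.Ico_add_one_right_eq_Icc k1 k2]
        apply Finset.sum_le_sum_of_subset_of_nonneg
        · apply Finset.Ico_subset_Ico le_rfl h'
        · intro i hi _; exact hEkpos i (by simp [Finset.mem_Icc]; simp [Finset.mem_Ico] at hi; omega)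
    · have hsplit : ∑ i ∈ Finset.range j, Q i = Etot + ∑ i ∈ Finset.Ico (k2+1) j, Q i := by
        rw [Finset.range_eq_Ico, ← Finset.sum_Ico_consecutive Q (Nat.zero_le (k2+1)) (by omega),
          ← Finset.range_eq_Ico, hcumE]
      have hsplit2 : ∑ i ∈ Finset.Ico (k2+1) K, Q i
          = ∑ i ∈ Finset.Ico (k2+1) j, Q i + ∑ i ∈ Finset.Ico j K, Q i :=
        (Finset.sum_Ico_consecutive Q (by omega) hj).symm
      have hnp : ∀ i ∈ Finset.Ico (k2+1) j, Q i ≤ 0 := fun i hi =>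
        (h2 i (by simp [Finset.mem_Ico] at hi ⊢; omega)).2
      have hnp2 : ∑ i ∈ Finset.Ico j K, Q i ≤ 0 :=
        Finset.sum_nonpos fun i hi => (h2 i (by simp [Finset.mem_Ico] at hi ⊢; omega)).2
      have : ∑ i ∈ Finset.Ico (k2+1) j, Q i ≥ -Etot := by
        have := h3; rw [hsplit2] at this; linarith
      have hle : ∑ i ∈ Finset.Ico (k2+1) j, Q i ≤ 0 := Finset.sum_nonpos hnp
      rw [hsplit]; constructor <;> linarith
  · rw [range_split K k1 k2 (by omega) (by omega)]
    have e1 : ∑ k ∈ Finset.range k1, max (Q k) 0 = 0 :=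
      Finset.sum_eq_zero fun i hi => by rw [hB i (by simp at hi; omega)]; simp
    have e2 : ∑ k ∈ Finset.Icc k1 k2, max (Q k) 0 = Etot := by
      apply Finset.sum_congr rfl
      intro i hi
      rw [hA i hi]; exact max_eq_left (hEkpos i hi)
    have e3 : ∑ k ∈ Finset.Ico (k2+1) K, max (Q k) 0 = 0 :=
      Finset.sum_eq_zero fun i hi => max_eq_right (h2 i hi).2
    rw [e1, e2, e3]; ring

lemma exists_min_F0 (K k1 k2 : ℕ) (pgmin : ℝ) (pL : ℕ → ℝ)
    (hk12 : k1 ≤ k2) (hk2 : k2 + 2 ≤ K)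
    (hEkneg : ∀ k ∈ Finset.Ico (k2+1) K, pgmin - pL k ≤ 0)
    (hSa : 0 < ∑ k ∈ Finset.Ico (k2+1) K, (pL k - pgmin))
    (hE0 : 0 ≤ ∑ k ∈ Finset.Icc k1 k2, (pgmin - pL k))
    (hESa : ∑ k ∈ Finset.Icc k1 k2, (pgmin - pL k)
      ≤ ∑ k ∈ Finset.Ico (k2+1) K, (pL k - pgmin)) :
    ∃ Qh ∈ F0set K k1 k2 pgmin pL,
      ∀ Q' ∈ F0set K k1 k2 pgmin pL, PhiQ K pL Qh ≤ PhiQ K pL Q' := by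
  classical
  set A := Finset.Icc k1 k2 with hAdef
  set Af := Finset.Ico (k2+1) K with hAfdef
  set Etot := ∑ k ∈ A, (pgmin - pL k) with hEtot
  set Sa := ∑ k ∈ Af, (pL k - pgmin) with hSadef
  have hSane : Sa ≠ 0 := ne_of_gt hSa
  set th := Etot / Sa with hth
  have hth0 : 0 ≤ th := div_nonneg hE0 (le_of_lt hSa)
  have hth1 : th ≤ 1 := by rw [hth, div_le_one hSa]; exact hESa
  have hthSa : th * Sa = Etot := by rw [hth]; field_simp
  have hdisj : ∀ k, k ∈ Af → k ∉ A := by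
    intro k hk; simp [hAfdef, Finset.mem_Ico] at hk; simp [hAdef, Finset.mem_Icc]; omega
  set Q0 : ℕ → ℝ := fun k => if k ∈ A then pgmin - pL k
      else if k ∈ Af then th * (pgmin - pL k) else 0 with hQ0def
  have hQ0 : Q0 ∈ F0set K k1 k2 pgmin pL := by
    refine ⟨?_, ?_, ?_⟩
    · intro k hk
      by_cases h : k ∈ A
      · show (if k ∈ A then _ else _) = _
        rw [if_pos h]; exact (if_pos h).symm
      · show (if k ∈ A then _ else _) = _
        rw [if_neg h, if_neg (show k ∉ Af from hk)]; exact (if_neg h).symm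
    · intro k hk
      have hkA := hdisj k hk
      have hek := hEkneg k hk
      simp only [hQ0def, if_neg hkA, if_pos (show k ∈ Af from hk)]
      constructor <;> nlinarith
    · have : ∀ k ∈ Af, Q0 k = th * (pgmin - pL k) := by
        intro k hk; simp [hQ0def, hdisj k hk, hk]
      rw [Finset.sum_congr rfl this, ← Finset.mul_sum]
      have : ∑ k ∈ Af, (pgmin - pL k) = -Sa := by
        rw [hSadef, ← Finset.sum_neg_distrib]
        exact Finset.sum_congr rfl fun i _ => by ring
      rw [this, ← hEtot]
      rw [← hthSa]; ring
  set S : ℕ → Set ℝ := fun k => if k ∈ Af then Set.Icc (pgmin - pL k) 0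
      else {(if k ∈ A then pgmin - pL k else 0)} with hSdef
  have hcpi : IsCompact (Set.pi Set.univ S) := by
    apply isCompact_univ_pi
    intro k
    by_cases h : k ∈ Af <;> simp only [hSdef, if_pos, if_neg, h, if_true, if_false]
    · exact isCompact_Icc
    · exact isCompact_singleton
  have hcl : IsClosed {Q : ℕ → ℝ | ∑ k ∈ Af, Q k = -Etot} :=
    isClosed_eq (continuous_finset_sum _ fun i _ => continuous_apply i) continuous_const
  have heq : F0set K k1 k2 pgmin pL
      = Set.pi Set.univ S ∩ {Q : ℕ → ℝ | ∑ k ∈ Af, Q k = -Etot} := by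
    ext Q
    constructor
    · rintro ⟨h1, h2, h3⟩
      refine ⟨?_, h3⟩
      intro k _
      by_cases h : k ∈ Af
      · simp only [hSdef, if_pos h]
        exact Set.mem_Icc.mpr (h2 k h)
      · simp only [hSdef, if_neg h]
        exact Set.mem_singleton_iff.mpr (h1 k h)
    · rintro ⟨h1, h2⟩
      refine ⟨?_, ?_, h2⟩
      · intro k hk
        have := h1 k (Set.mem_univ k)
        simp only [hSdef, if_neg (show k ∉ Af from hk), Set.mem_singleton_iff] at this
        exact this
      · intro k hk
        have := h1 k (Set.mem_univ k)
        rw [hSdef] at this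
        simp only [if_pos (show k ∈ Af from hk)] at this
        exact Set.mem_Icc.mp this
  have hcont : Continuous (PhiQ K pL) := by
    unfold PhiQ
    apply continuous_finset_sum
    intro i _
    exact (((continuous_apply i).pow 2).div_const 2).add (continuous_const.mul (continuous_apply i))
  have hcomp : IsCompact (F0set K k1 k2 pgmin pL) := by
    rw [heq]; exact hcpi.inter_right hcl
  obtain ⟨Qh, hQhmem, hQhmin⟩ := hcomp.exists_isMinOn ⟨Q0, hQ0⟩ hcont.continuousOn
  exact ⟨Qh, hQhmem, fun Q' hQ' => hQhmin hQ'⟩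

/-- Duopoly with equal bids `c_1 = c_2 ≥ c_min`: any feasible allocation `(s_1, s_2)` of
the excess energy `E_absorb` between the two firms is achieved by some optimal solution;
in particular the fair split `E_{m,split}` is achieved by an optimal solution. -/
theorem stmt7 (K : ℕ) (Δ a pgmin : ℝ) (hΔ : 0 < Δ) (ha : 0 < a)
    (pL emax : ℕ → ℝ) (hemax : ∀ m < 2, 0 < emax m)
    (k1 k2 : ℕ) (hk1 : 1 ≤ k1) (hk12 : k1 ≤ k2) (hk2 : k2 + 2 ≤ K)
    (habsorb : ∀ k < K, (pL k ≤ pgmin ↔ k1 ≤ k ∧ k ≤ k2))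
    (hEcap : ∑ k ∈ Finset.Icc k1 k2, (pgmin - pL k) ≤ (emax 0 + emax 1) / Δ)
    (hne : ∃ p pchg : ℕ → ℕ → ℝ, Feasible K 2 Δ pgmin pL emax p pchg) :
    ∃ cmin : ℝ, 0 < cmin ∧
      ∀ c : ℕ → ℝ, c 0 = c 1 → cmin ≤ c 0 →
        (∀ s0 s1 : ℝ, 0 ≤ s0 → 0 ≤ s1 →
          s0 + s1 = ∑ k ∈ Finset.Icc k1 k2, (pgmin - pL k) →
          s0 ≤ emax 0 / Δ → s1 ≤ emax 1 / Δ →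
          ∃ p pchg : ℕ → ℕ → ℝ, Optimal K 2 Δ a pgmin pL emax c p pchg ∧
            ∑ k ∈ Finset.range K, pchg 0 k = s0 ∧
            ∑ k ∈ Finset.range K, pchg 1 k = s1) ∧
        (∃ p pchg : ℕ → ℕ → ℝ, Optimal K 2 Δ a pgmin pL emax c p pchg ∧
          ∑ k ∈ Finset.range K, pchg 0 k
            = min (max ((∑ k ∈ Finset.Icc k1 k2, (pgmin - pL k)) / 2)
                (∑ k ∈ Finset.Icc k1 k2, (pgmin - pL k) - emax 1 / Δ)) (emax 0 / Δ) ∧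
          ∑ k ∈ Finset.range K, pchg 1 k
            = min (max ((∑ k ∈ Finset.Icc k1 k2, (pgmin - pL k)) / 2)
                (∑ k ∈ Finset.Icc k1 k2, (pgmin - pL k) - emax 0 / Δ)) (emax 1 / Δ)) := by
  classical
  have he0 : 0 < emax 0 := hemax 0 (by norm_num)
  have he1 : 0 < emax 1 := hemax 1 (by norm_num)
  set Etot := ∑ k ∈ Finset.Icc k1 k2, (pgmin - pL k) with hEtotdef
  set Eb := (emax 0 + emax 1) / Δ with hEbdef
  have hEb0 : 0 ≤ Eb := by rw [hEbdef]; positivity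
  have hEbsplit : Eb = emax 0 / Δ + emax 1 / Δ := by rw [hEbdef, add_div]
  have hEkpos : ∀ k ∈ Finset.Icc k1 k2, 0 ≤ pgmin - pL k := by
    intro k hk
    simp only [Finset.mem_Icc] at hk
    have := (habsorb k (by omega)).mpr hk
    linarith
  have hEkneg : ∀ k < K, k ∉ Finset.Icc k1 k2 → pgmin - pL k ≤ 0 := by
    intro k hk hk'
    simp only [Finset.mem_Icc] at hk'
    have := (habsorb k hk)
    by_contra h
    exact hk' (this.mp (by linarith))
  have hEkneg' : ∀ k ∈ Finset.Ico (k2+1) K, pgmin - pL k ≤ 0 := by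
    intro k hk
    simp only [Finset.mem_Ico] at hk
    exact hEkneg k (by omega) (by simp [Finset.mem_Icc]; omega)
  have hE0 : 0 ≤ Etot := Finset.sum_nonneg hEkpos
  have hsum2 : ∀ g : ℕ → ℝ, ∑ m ∈ Finset.range 2, g m = g 0 + g 1 := by
    intro g; rw [Finset.sum_range_succ, Finset.sum_range_one]
  -- aggregate facts for feasible pairs
  have aggr : ∀ q qchg : ℕ → ℕ → ℝ, Feasible K 2 Δ pgmin pL emax q qchg →
      (∀ k < K, pgmin - pL k ≤ q 0 k + q 1 k) ∧
      (∀ j ≤ K, 0 ≤ ∑ i ∈ Finset.range j, (q 0 i + q 1 i) ∧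
        ∑ i ∈ Finset.range j, (q 0 i + q 1 i) ≤ Eb) ∧
      ∑ i ∈ Finset.range K, (q 0 i + q 1 i) = 0 := by
    intro q qchg hq
    obtain ⟨f1, f2, f3, f4⟩ := hq
    have hsp : ∀ j, ∑ i ∈ Finset.range j, (q 0 i + q 1 i)
        = ∑ i ∈ Finset.range j, q 0 i + ∑ i ∈ Finset.range j, q 1 i :=
      fun j => Finset.sum_add_distrib
    refine ⟨?_, ?_, ?_⟩
    · intro k hk
      have := f1 k hk
      rwa [hsum2 (fun m => q m k)] at this
    · intro j hj
      rcases Nat.eq_zero_or_pos j with h | h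

      · subst h; simp [hEb0]
      rcases eq_or_lt_of_le hj with h' | h'

      · subst h'
        rw [hsp, f4 0 (by norm_num), f4 1 (by norm_num)]
        simp [hEb0]

      · have h30 := f3 0 (by norm_num) j (by omega) (by omega)
        have h31 := f3 1 (by norm_num) j (by omega) (by omega)
        rw [hsp]
        constructor
        · linarith [h30.1, h31.1]
        · rw [hEbsplit]; linarith [h30.2, h31.2]
    · rw [hsp, f4 0 (by norm_num), f4 1 (by norm_num)]; ring
  -- E ≤ Sa from nonemptiness
  have hSa : 0 < ∑ k ∈ Finset.Ico (k2+1) K, (pL k - pgmin) := by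
    apply Finset.sum_pos
    · intro k hk
      simp only [Finset.mem_Ico] at hk
      have h := habsorb k (by omega)
      have : ¬ (pL k ≤ pgmin) := by
        intro hle
        have := h.mp hle
        omega
      linarith [lt_of_not_ge this]
    · exact ⟨k2+1, by simp [Finset.mem_Ico]; omega⟩
  have hESa : Etot ≤ ∑ k ∈ Finset.Ico (k2+1) K, (pL k - pgmin) := by
    obtain ⟨q, qchg, hq⟩ := hne
    obtain ⟨ag1, ag2, ag3⟩ := aggr q qchg hq
    have h1 : Etot ≤ ∑ i ∈ Finset.Ico k1 (k2+1), (q 0 i + q 1 i) := by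
      rw [hEtotdef, ← Finset.Ico_add_one_right_eq_Icc k1 k2]
      apply Finset.sum_le_sum
      intro i hi
      simp only [Finset.mem_Ico] at hi
      exact ag1 i (by omega)
    have h2 : 0 ≤ ∑ i ∈ Finset.range k1, (q 0 i + q 1 i) := (ag2 k1 (by omega)).1
    have h3 : ∑ i ∈ Finset.range k1, (q 0 i + q 1 i)
        + ∑ i ∈ Finset.Ico k1 (k2+1), (q 0 i + q 1 i)
        + ∑ i ∈ Finset.Ico (k2+1) K, (q 0 i + q 1 i) = 0 := by
      rw [Finset.range_eq_Ico,
        Finset.sum_Ico_consecutive _ (Nat.zero_le k1) (by omega : k1 ≤ k2+1)]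
      rw [Finset.sum_Ico_consecutive _ (Nat.zero_le (k2+1)) (by omega : k2+1 ≤ K)]
      rw [← Finset.range_eq_Ico]
      exact ag3
    have h5 : -∑ k ∈ Finset.Ico (k2+1) K, (pL k - pgmin)
        ≤ ∑ i ∈ Finset.Ico (k2+1) K, (q 0 i + q 1 i) := by
      rw [← Finset.sum_neg_distrib]
      apply Finset.sum_le_sum
      intro i hi
      simp only [Finset.mem_Ico] at hi
      have := ag1 i (by omega)
      linarith
    linarith
  -- the minimizer
  obtain ⟨Qh, hQhmem, hQhmin⟩ := exists_min_F0 K k1 k2 pgmin pL hk12 hk2 hEkneg' hSa hE0 hESa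
  obtain ⟨hQh1, hQh2, hQh3, hQh4⟩ :=
    F0_facts K k1 k2 pgmin pL hk1 hk12 hk2 hEkpos hEkneg Qh hQhmem
  have hQhzero : Etot = 0 → ∀ k, Qh k = 0 := by
    intro hE k
    obtain ⟨m1, m2, m3⟩ := hQhmem
    have hAz : ∀ j ∈ Finset.Icc k1 k2, pgmin - pL j = 0 := by
      have := (Finset.sum_eq_zero_iff_of_nonneg hEkpos).mp (by rw [← hEtotdef]; exact hE)
      exact this
    by_cases hk : k ∈ Finset.Ico (k2+1) K
    · have hnp : ∀ j ∈ Finset.Ico (k2+1) K, Qh j ≤ 0 := fun j hj => (m2 j hj).2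
      have : ∑ j ∈ Finset.Ico (k2+1) K, Qh j = 0 := by
        rw [m3, ← hEtotdef, hE]; ring
      exact (Finset.sum_eq_zero_iff_of_nonpos hnp).mp this k hk
    · rw [m1 k hk]
      by_cases hk' : k ∈ Finset.Icc k1 k2
      · rw [if_pos hk']; exact hAz k hk'
      · rw [if_neg hk']
  set Mx := ∑ k ∈ Finset.range K, |pL k| with hMxdef
  have hMx0 : 0 ≤ Mx := Finset.sum_nonneg fun i _ => abs_nonneg _
  refine ⟨a * (3 * (Eb + Mx) + 1), mul_pos ha (by linarith), ?_⟩
  intro c hc01 hcmin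
  have hc0pos : 0 < c 0 := lt_of_lt_of_le (mul_pos ha (by linarith)) hcmin
  have hca0 : 0 ≤ c 0 / a := le_of_lt (div_pos hc0pos ha)
  have hPhiLink : ∀ Q : ℕ → ℝ, PhiQ K pL Q
      = (1/2) * ∑ k ∈ Finset.range K, (Q k)^2 + ∑ k ∈ Finset.range K, pL k * Q k := by
    intro Q
    rw [PhiQ, Finset.sum_add_distrib, Finset.mul_sum]
    congr 1
    exact Finset.sum_congr rfl fun i _ => by ring
  -- main construction
  have main : ∀ s0 s1 : ℝ, 0 ≤ s0 → 0 ≤ s1 → s0 + s1 = Etot →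
      s0 ≤ emax 0 / Δ → s1 ≤ emax 1 / Δ →
      ∃ p pchg : ℕ → ℕ → ℝ, Optimal K 2 Δ a pgmin pL emax c p pchg ∧
        ∑ k ∈ Finset.range K, pchg 0 k = s0 ∧
        ∑ k ∈ Finset.range K, pchg 1 k = s1 := by
    intro s0 s1 hs0 hs1 hssum hse0 hse1
    set l : ℕ → ℝ := fun m => if Etot = 0 then 0 else (if m = 0 then s0 else s1) / Etot
      with hldef
    have hl0 : ∀ m, 0 ≤ l m := by
      intro m
      rw [hldef]
      by_cases hE : Etot = 0
      · simp [hE]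
      · have hEpos : 0 < Etot := lt_of_le_of_ne hE0 (Ne.symm hE)
        simp only [if_neg hE]
        split <;> [exact div_nonneg hs0 (le_of_lt hEpos); exact div_nonneg hs1 (le_of_lt hEpos)]
    have hlE : l 0 * Etot = s0 ∧ l 1 * Etot = s1 := by
      by_cases hE : Etot = 0
      · have : s0 = 0 ∧ s1 = 0 := by constructor <;> linarith [hssum, hE ▸ hssum]
        rw [hldef]
        simp [hE, this.1, this.2]
      · rw [hldef]
        simp only [if_neg hE]
        constructor <;> [field_simp; skip]
        · simp [hE]
        simp only [if_neg (one_ne_zero)]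
        field_simp
    set p : ℕ → ℕ → ℝ := fun m k => l m * Qh k with hpdef
    set pchg : ℕ → ℕ → ℝ := fun m k => max (p m k) 0 with hpchgdef
    have hagg : ∀ k, p 0 k + p 1 k = Qh k := by
      intro k
      rw [hpdef]
      by_cases hE : Etot = 0
      · simp only [hldef, if_pos hE]
        rw [hQhzero hE k]; ring
      · simp only [hldef, if_neg hE, if_true, if_false, one_ne_zero]
        have hEne : Etot ≠ 0 := hE
        field_simp
        rw [← hssum]; ring
    have hpsum : ∀ k, ∑ m ∈ Finset.range 2, p m k = Qh k := by
      intro k; rw [hsum2 (fun m => p m k)]; exact hagg k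
    have hchg : ∀ m, ∑ k ∈ Finset.range K, pchg m k = l m * Etot := by
      intro m
      have : ∀ k, pchg m k = l m * max (Qh k) 0 := by
        intro k
        rw [hpchgdef, hpdef]
        simp only
        rw [mul_max_of_nonneg _ _ (hl0 m), mul_zero]
      rw [Finset.sum_congr rfl fun k _ => this k, ← Finset.mul_sum, hQh4]
    have hfeas : Feasible K 2 Δ pgmin pL emax p pchg := by
      refine ⟨?_, ?_, ?_, ?_⟩
      · intro k hk
        rw [hpsum k]
        exact hQh1 k hk
      · intro m _ k _
        exact ⟨le_max_right _ _, le_max_left _ _⟩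
      · intro m hm k hk1' hk2'
        have hkK : k ≤ K := by omega
        have hcum := hQh2 k hkK
        have : ∑ j ∈ Finset.range k, p m j = l m * ∑ j ∈ Finset.range k, Qh j := by
          rw [hpdef, ← Finset.mul_sum]
        rw [this]
        constructor
        · exact mul_nonneg (hl0 m) hcum.1
        · have hup : l m * ∑ j ∈ Finset.range k, Qh j ≤ l m * Etot :=
            mul_le_mul_of_nonneg_left hcum.2 (hl0 m)
          have hm2 : m = 0 ∨ m = 1 := by omega
          rcases hm2 with h | h
          · subst h; rw [hlE.1] at hup; linarith
          · subst h; rw [hlE.2] at hup; linarith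
      · intro m _
        rw [hpdef, ← Finset.mul_sum, hQh3]; ring
    have hobj_p : Objective K 2 a pL c p pchg = PhiQ K pL Qh + (c 0 / a) * Etot := by
      rw [Objective]
      have e1 : ∑ k ∈ Finset.range K, (∑ m ∈ Finset.range 2, p m k)^2
          = ∑ k ∈ Finset.range K, (Qh k)^2 :=
        Finset.sum_congr rfl fun k _ => by rw [hpsum k]
      have e2 : ∑ k ∈ Finset.range K, ∑ m ∈ Finset.range 2, pL k * p m k
          = ∑ k ∈ Finset.range K, pL k * Qh k := by
        apply Finset.sum_congr rfl
        intro k _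
        rw [hsum2 (fun m => pL k * p m k), ← mul_add, hagg k]
      have e3 : ∑ k ∈ Finset.range K, ∑ m ∈ Finset.range 2, (c m / a) * pchg m k
          = (c 0 / a) * Etot := by
        have : ∀ k, ∑ m ∈ Finset.range 2, (c m / a) * pchg m k
            = (c 0 / a) * (pchg 0 k + pchg 1 k) := by
          intro k
          rw [hsum2 (fun m => (c m / a) * pchg m k), ← hc01]
          ring
        rw [Finset.sum_congr rfl fun k _ => this k, ← Finset.mul_sum,
          Finset.sum_add_distrib, hchg 0, hchg 1]
        rw [hlE.1, hlE.2, hssum]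
      rw [e1, e2, e3, hPhiLink Qh]
    have hopt : ∀ q qchg : ℕ → ℕ → ℝ, Feasible K 2 Δ pgmin pL emax q qchg →
        Objective K 2 a pL c p pchg ≤ Objective K 2 a pL c q qchg := by
      intro q qchg hq
      obtain ⟨ag1, ag2, ag3⟩ := aggr q qchg hq
      obtain ⟨f1, f2, f3, f4⟩ := hq
      have hlb : PhiQ K pL (fun k => q 0 k + q 1 k)
          + (c 0 / a) * ∑ k ∈ Finset.range K, max (q 0 k + q 1 k) 0
          ≤ Objective K 2 a pL c q qchg := by
        rw [Objective]
        have e1 : ∑ k ∈ Finset.range K, (∑ m ∈ Finset.range 2, q m k)^2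
            = ∑ k ∈ Finset.range K, (q 0 k + q 1 k)^2 :=
          Finset.sum_congr rfl fun k _ => by rw [hsum2 (fun m => q m k)]
        have e2 : ∑ k ∈ Finset.range K, ∑ m ∈ Finset.range 2, pL k * q m k
            = ∑ k ∈ Finset.range K, pL k * (q 0 k + q 1 k) := by
          apply Finset.sum_congr rfl
          intro k _
          rw [hsum2 (fun m => pL k * q m k)]
          ring
        have e3 : (c 0 / a) * ∑ k ∈ Finset.range K, max (q 0 k + q 1 k) 0
            ≤ ∑ k ∈ Finset.range K, ∑ m ∈ Finset.range 2, (c m / a) * qchg m k := by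
          have hterm : ∀ k ∈ Finset.range K, max (q 0 k + q 1 k) 0 ≤ qchg 0 k + qchg 1 k := by
            intro k hk
            have hkK := Finset.mem_range.mp hk
            have h0 := f2 0 (by norm_num) k hkK
            have h1 := f2 1 (by norm_num) k hkK
            exact max_le (by linarith [h0.2, h1.2]) (by linarith [h0.1, h1.1])
          calc (c 0 / a) * ∑ k ∈ Finset.range K, max (q 0 k + q 1 k) 0
              ≤ (c 0 / a) * ∑ k ∈ Finset.range K, (qchg 0 k + qchg 1 k) :=
                mul_le_mul_of_nonneg_left (Finset.sum_le_sum hterm) hca0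
            _ = ∑ k ∈ Finset.range K, ∑ m ∈ Finset.range 2, (c m / a) * qchg m k := by
                rw [Finset.mul_sum]
                apply Finset.sum_congr rfl
                intro k _
                rw [hsum2 (fun m => (c m / a) * qchg m k), ← hc01]
                ring
        rw [e1, e2, hPhiLink]
        linarith [e3]
      have hpen := penalty K k1 k2 a pgmin Eb (c 0) pL ha hk1 hk12 hk2 hEkpos hEkneg hEb0
        (by rw [← hEtotdef]; exact hEcap) Qh hQhmin hcmin (fun k => q 0 k + q 1 k)
        ag1 ag2 ag3
      rw [hobj_p]
      calc PhiQ K pL Qh + (c 0 / a) * Etot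
          ≤ PhiQ K pL (fun k => q 0 k + q 1 k)
            + (c 0 / a) * ∑ k ∈ Finset.range K, max (q 0 k + q 1 k) 0 := by
            rw [hEtotdef]; exact hpen
        _ ≤ Objective K 2 a pL c q qchg := hlb
    refine ⟨p, pchg, ⟨hfeas, hopt⟩, ?_, ?_⟩
    · rw [hchg 0, hlE.1]
    · rw [hchg 1, hlE.2]
  refine ⟨fun s0 s1 hs0 hs1 hssum hse0 hse1 => main s0 s1 hs0 hs1 hssum hse0 hse1, ?_⟩
  -- fair split
  set e0 := emax 0 / Δ with he0def
  set e1' := emax 1 / Δ with he1def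
  have he0p : 0 < e0 := by rw [he0def]; positivity
  have he1p : 0 < e1' := by rw [he1def]; positivity
  have hcapE : Etot ≤ e0 + e1' := by rw [he0def, he1def, ← add_div]; exact hEcap
  set s0f := min (max (Etot / 2) (Etot - e1')) e0 with hs0fdef
  set s1f := min (max (Etot / 2) (Etot - e0)) e1' with hs1fdef
  have hs0f0 : 0 ≤ s0f := by
    rw [hs0fdef]
    apply le_min (le_trans (by linarith) (le_max_left _ _)) (le_of_lt he0p)
  have hs1f0 : 0 ≤ s1f := by
    rw [hs1fdef]
    apply le_min (le_trans (by linarith) (le_max_left _ _)) (le_of_lt he1p)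
  have hsfsum : s0f + s1f = Etot := by
    rw [hs0fdef, hs1fdef, min_def, min_def, max_def, max_def]
    split_ifs <;> linarith
  obtain ⟨p, pchg, hoptm, hp0, hp1⟩ :=
    main s0f s1f hs0f0 hs1f0 hsfsum (min_le_right _ _) (min_le_right _ _)
  exact ⟨p, pchg, hoptm, by rw [hp0], by rw [hp1]⟩
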